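/- Let R be a finite ring and r ∈ R a nonzero element with 2r ≠ 0. Let Γ_R^r be the graph with vertex set R and distinct vertices x,y adjacent iff [x,y] ≠ r and [y,x] ≠ r. Then 2|E(Γ_R^r)| = |R|^2 - |R| - 2|R|^2 · Pr_r(R), i.e., Pr_r(R) = (1/2)(1 - 1/|R| - 2|E(Γ_R^r)|/|R|^2). -/

import Mathlib

/-- The `r`-noncommuting graph of a ring `R`: distinct `x`, `y` are adjacent iff
`[x,y] ≠ r` and `[y,x] ≠ r`. -/
def rNoncommGraph (R : Type*) [Ring R] (r : R) : SimpleGraph R where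
  Adj x y := x ≠ y ∧ x * y - y * x ≠ r ∧ y * x - x * y ≠ r
  symm := by
    constructor
    rintro x y ⟨h1, h2, h3⟩
    exact ⟨h1.symm, h3, h2⟩
  loopless := by constructor; rintro x ⟨h1, _⟩; exact h1 rfl

theorem stmt_11 (R : Type*) [Ring R] [Fintype R] (r : R) (hr : r ≠ 0) (h2r : 2 • r ≠ 0) :
    2 * Nat.card (rNoncommGraph R r).edgeSet + Fintype.card R +
        2 * Nat.card {p : R × R | p.1 * p.2 - p.2 * p.1 = r} =
      Fintype.card R ^ 2 := by
  classical
  set G := rNoncommGraph R r with hG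
  have hadj : ∀ x y : R, G.Adj x y ↔ x ≠ y ∧ x * y - y * x ≠ r ∧ y * x - x * y ≠ r := by
    intro x y; rfl
  -- the four filters
  have hA : Nat.card {p : R × R | p.1 * p.2 - p.2 * p.1 = r}
      = (Finset.univ.filter fun p : R × R => p.1 * p.2 - p.2 * p.1 = r).card := by
    rw [Nat.card_eq_fintype_card]
    exact Fintype.card_subtype _
  have hE : 2 * Nat.card G.edgeSet
      = (Finset.univ.filter fun p : R × R => G.Adj p.1 p.2).card := by
    rw [Nat.card_eq_fintype_card, ← Set.toFinset_card, ← SimpleGraph.edgeFinset,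
      G.two_mul_card_edgeFinset]
  have hdiag : (Finset.univ.filter fun p : R × R => p.1 = p.2).card = Fintype.card R := by
    have h : (Finset.univ.filter fun p : R × R => p.1 = p.2)
        = (Finset.univ : Finset R).diag := by
      ext p; simp [Finset.mem_diag]
    rw [h, Finset.diag_card, Finset.card_univ]
  have hswap : (Finset.univ.filter fun p : R × R => p.2 * p.1 - p.1 * p.2 = r).card
      = (Finset.univ.filter fun p : R × R => p.1 * p.2 - p.2 * p.1 = r).card := by
    apply Finset.card_bij (fun p _ => Prod.swap p)
    · intro p hp; simp only [Finset.mem_filter, Finset.mem_univ, true_and] at hp ⊢; exact hp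
    · intro p _ q _ h; exact Prod.swap_injective h
    · intro p hp
      refine ⟨Prod.swap p, ?_, by simp⟩
      simp only [Finset.mem_filter, Finset.mem_univ, true_and] at hp ⊢
      exact hp
  have key : (Finset.univ.filter fun p : R × R => G.Adj p.1 p.2).card
      + (Finset.univ.filter fun p : R × R => p.1 = p.2).card
      + ((Finset.univ.filter fun p : R × R => p.1 * p.2 - p.2 * p.1 = r).card
        + (Finset.univ.filter fun p : R × R => p.2 * p.1 - p.1 * p.2 = r).card)
      = Fintype.card (R × R) := by
    rw [Finset.card_filter, Finset.card_filter, Finset.card_filter, Finset.card_filter,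
      ← Finset.card_univ, Finset.card_eq_sum_ones, ← Finset.sum_add_distrib,
      ← Finset.sum_add_distrib, ← Finset.sum_add_distrib]
    apply Finset.sum_congr rfl
    intro p _
    by_cases h1 : p.1 = p.2
    · have hz : p.1 * p.2 - p.2 * p.1 = 0 := by rw [h1]; exact sub_self _
      have hz2 : p.2 * p.1 - p.1 * p.2 = 0 := by rw [h1]; exact sub_self _
      have hadj' : ¬ G.Adj p.1 p.2 := fun h => h.1 h1
      rw [if_neg hadj', if_pos h1,
        if_neg (fun h => hr (by rw [hz] at h; exact h.symm)),
        if_neg (fun h => hr (by rw [hz2] at h; exact h.symm))]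
      rfl
    · by_cases h2 : p.1 * p.2 - p.2 * p.1 = r
      · have h3 : ¬ p.2 * p.1 - p.1 * p.2 = r := by
          intro h3
          apply h2r
          rw [two_smul]
          calc r + r = (p.1 * p.2 - p.2 * p.1) + (p.2 * p.1 - p.1 * p.2) := by rw [h2, h3]
            _ = 0 := by noncomm_ring
        have hadj' : ¬ G.Adj p.1 p.2 := fun h => h.2.1 h2
        rw [if_neg hadj', if_neg h1, if_pos h2, if_neg h3]
        rfl
      · by_cases h3 : p.2 * p.1 - p.1 * p.2 = r
        · have hadj' : ¬ G.Adj p.1 p.2 := fun h => h.2.2 h3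
          rw [if_neg hadj', if_neg h1, if_neg h2, if_pos h3]
          rfl
        · rw [if_pos ((hadj p.1 p.2).2 ⟨h1, h2, h3⟩), if_neg h1, if_neg h2, if_neg h3]
          rfl
  rw [hE, hA]
  rw [Fintype.card_prod, ← sq, hswap, hdiag] at key
  omega
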